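/- arXiv:2004.03069 — 4 statements merged into one kernel-verified Lean document; each statement's English description precedes it below -/
import Mathlib

section
/- Let ζ be a real random variable with continuous CDF F, and let ζ₁,...,ζₙ be i.i.d. copies of ζ. Fix α ∈ (0,1) and αₙ ∈ (α, 1). Then P(F_n^{-1}(αₙ) < F^{-1}(α)) = Σ_{i=0}^{n - ⌈n αₙ⌉} C(n,i) (1-α)^i α^{n-i}, i.e., the probability that the empirical αₙ-quantile undershoots the true α-quantile equals a lower binomial tail with parameters n and 1-α. -/
open MeasureTheory ProbabilityTheory

/-- The empirical distribution function `F_n(z) = (1/n) ∑ᵢ 1{ζᵢ ≤ z}`. -/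
noncomputable def empCDF (n : ℕ) (ζ : Fin n → ℝ) (z : ℝ) : ℝ :=
  ((Finset.univ.filter (fun i => ζ i ≤ z)).card : ℝ) / n

/-- The empirical quantile function `F_n^{-1}(γ) = inf {z | F_n(z) ≥ γ}`. -/
noncomputable def empQuantile (n : ℕ) (ζ : Fin n → ℝ) (γ : ℝ) : ℝ :=
  sInf {z : ℝ | γ ≤ empCDF n ζ z}

/-- For an i.i.d. sample with continuous CDF `F`, the probability that the empirical
`αₙ`-quantile undershoots the true `α`-quantile equals the lower binomial tail
`∑_{i=0}^{n-⌈nαₙ⌉} C(n,i) (1-α)ⁱ α^{n-i}`. -/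
theorem empQuantile_undershoot_prob
    {Ω : Type*} [MeasurableSpace Ω] (P : Measure Ω) [IsProbabilityMeasure P]
    (n : ℕ) (hn : 0 < n) (ζ : Fin n → Ω → ℝ) (hmeas : ∀ i, Measurable (ζ i))
    (hindep : iIndepFun ζ P)
    (μ : Measure ℝ) (hident : ∀ i, P.map (ζ i) = μ)
    (F : ℝ → ℝ) (hF : ∀ z, F z = (μ (Set.Iic z)).toReal) (hFcont : Continuous F)
    (α αn : ℝ) (hα : α ∈ Set.Ioo (0 : ℝ) 1) (hαn : αn ∈ Set.Ioo α 1) :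
    (P {ω | empQuantile n (fun i => ζ i ω) αn < sInf {z : ℝ | α ≤ F z}}).toReal =
      ∑ i ∈ Finset.range (n - ⌈(n : ℝ) * αn⌉₊ + 1),
        (n.choose i : ℝ) * (1 - α) ^ i * α ^ (n - i) := by
  obtain ⟨hα0, hα1⟩ := hα
  obtain ⟨hαn1, hαn2⟩ := hαn
  have hαn0 : 0 < αn := hα0.trans hαn1
  haveI : Nonempty (Fin n) := ⟨⟨0, hn⟩⟩
  set q := sInf {z : ℝ | α ≤ F z} with hq
  set k := ⌈(n : ℝ) * αn⌉₊ with hkdef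
  haveI hμ : IsProbabilityMeasure μ := by
    rw [← hident ⟨0, hn⟩]
    exact Measure.isProbabilityMeasure_map (hmeas _).aemeasurable
  have hμfin : ∀ s : Set ℝ, μ s ≠ ⊤ := fun s => measure_ne_top μ s
  have Fmono : Monotone F := fun a b hab => by
    rw [hF a, hF b]
    exact ENNReal.toReal_mono (hμfin _) (measure_mono (Set.Iic_subset_Iic.mpr hab))
  -- nonemptiness of the quantile set
  have hS_ne : Set.Nonempty {z : ℝ | α ≤ F z} := by
    have h1 : Filter.Tendsto F Filter.atTop (nhds 1) := by
      have h2 := (ENNReal.tendsto_toReal (hμfin Set.univ)).comp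
        (tendsto_measure_Iic_atTop (α := ℝ) μ)
      simp only [measure_univ, ENNReal.toReal_one] at h2
      have h3 : (ENNReal.toReal ∘ fun x : ℝ => μ (Set.Iic x)) = F :=
        funext fun z => (hF z).symm
      rwa [h3] at h2
    obtain ⟨z, hz⟩ := (h1.eventually (eventually_gt_nhds hα1)).exists
    exact ⟨z, hz.le⟩
  -- bddBelow of the quantile set
  have hS_bdd : BddBelow {z : ℝ | α ≤ F z} := by
    have h0 : Filter.Tendsto (fun j : ℕ => F (-(j : ℝ))) Filter.atTop (nhds 0) := by
      have h := tendsto_measure_iInter_atTop (μ := μ) (s := fun j : ℕ => Set.Iic (-(j : ℝ)))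
        (fun j => measurableSet_Iic.nullMeasurableSet)
        (fun a b hab => Set.Iic_subset_Iic.mpr (by exact_mod_cast neg_le_neg (Nat.cast_le.mpr hab)))
        ⟨0, hμfin _⟩
      have hempty : (⋂ j : ℕ, Set.Iic (-(j : ℝ))) = ∅ := by
        ext x
        simp only [Set.mem_iInter, Set.mem_Iic, Set.mem_empty_iff_false, iff_false, not_forall,
          not_le]
        obtain ⟨j, hj⟩ := exists_nat_gt (-x)
        exact ⟨j, by linarith⟩
      rw [hempty, measure_empty] at h
      have h2 := (ENNReal.tendsto_toReal (by simp)).comp h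
      simp only [ENNReal.toReal_zero] at h2
      have h3 : (ENNReal.toReal ∘ ⇑μ ∘ fun j : ℕ => Set.Iic (-(j : ℝ)))
          = fun j : ℕ => F (-(j : ℝ)) := funext fun j => (hF _).symm
      rwa [h3] at h2
    obtain ⟨j, hj⟩ := (h0.eventually (eventually_lt_nhds hα0)).exists
    refine ⟨-(j : ℝ), fun z hz => ?_⟩
    by_contra h
    push_neg at h
    have : F z ≤ F (-(j : ℝ)) := Fmono h.le
    have hz' : α ≤ F z := hz
    linarith
  have hSclosed : IsClosed {z : ℝ | α ≤ F z} := isClosed_le continuous_const hFcont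
  have hqS : α ≤ F q := hSclosed.csInf_mem hS_ne hS_bdd
  have hseq : Filter.Tendsto (fun j : ℕ => q - 1 / (j + 1)) Filter.atTop (nhds q) := by
    have h1 := tendsto_one_div_add_atTop_nhds_zero_nat (𝕜 := ℝ)
    simpa using Filter.Tendsto.sub (tendsto_const_nhds (x := q) (f := Filter.atTop)) h1
  have hcompF : Filter.Tendsto (fun j : ℕ => F (q - 1 / (j + 1))) Filter.atTop (nhds (F q)) :=
    (hFcont.tendsto q).comp hseq
  have hub : ∀ j : ℕ, q - 1 / (j + 1) < q := by
    intro j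
    have : (0 : ℝ) < 1 / (j + 1) := by positivity
    linarith
  have hFq : F q = α := by
    refine le_antisymm ?_ hqS
    refine le_of_tendsto hcompF (Filter.Eventually.of_forall fun j => ?_)
    by_contra h
    push_neg at h
    have hmem : q - 1 / (j + 1) ∈ {z : ℝ | α ≤ F z} := h.le
    have := csInf_le hS_bdd hmem
    have := hub j
    rw [← hq] at *
    linarith
  -- μ (Iio q) = ofReal α
  have hIioR : (μ (Set.Iio q)).toReal = α := by
    have hle : (μ (Set.Iio q)).toReal ≤ α := by
      rw [← hFq, hF]
      exact ENNReal.toReal_mono (hμfin _) (measure_mono Set.Iio_subset_Iic_self)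
    have hge : α ≤ (μ (Set.Iio q)).toReal := by
      have hcomp2 : Filter.Tendsto (fun j : ℕ => F (q - 1 / (j + 1))) Filter.atTop (nhds α) :=
        hFq ▸ hcompF
      refine le_of_tendsto hcomp2 (Filter.Eventually.of_forall fun j => ?_)
      rw [hF]
      exact ENNReal.toReal_mono (hμfin _)
        (measure_mono (fun x hx => lt_of_le_of_lt hx (hub j)))
    linarith
  have hIio : μ (Set.Iio q) = ENNReal.ofReal α := by
    rw [← hIioR, ENNReal.ofReal_toReal (hμfin _)]
  have hIci : μ (Set.Ici q) = ENNReal.ofReal (1 - α) := by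
    rw [← Set.compl_Iio, measure_compl measurableSet_Iio (hμfin _), measure_univ, hIio,
      ENNReal.ofReal_sub 1 hα0.le, ENNReal.ofReal_one]
  have hAi : ∀ i, P (ζ i ⁻¹' Set.Iio q) = ENNReal.ofReal α := fun i => by
    rw [← Measure.map_apply (hmeas i) measurableSet_Iio, hident i, hIio]
  have hBi : ∀ i, P (ζ i ⁻¹' Set.Ici q) = ENNReal.ofReal (1 - α) := fun i => by
    rw [← Measure.map_apply (hmeas i) measurableSet_Ici, hident i, hIci]
  -- facts about k
  have hk1 : 1 ≤ k := Nat.ceil_pos.mpr (by positivity)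
  have hkn : k ≤ n := Nat.ceil_le.mpr (by nlinarith [(Nat.cast_pos (α := ℝ)).mpr hn])
  -- pointwise characterization of the event
  have hEquiv : ∀ ω : Ω, (empQuantile n (fun i => ζ i ω) αn < q ↔
      (Finset.univ.filter fun i => q ≤ ζ i ω).card ≤ n - k) := by
    intro ω
    set g : Fin n → ℝ := fun i => ζ i ω with hg
    show empQuantile n g αn < q ↔ (Finset.univ.filter fun i => q ≤ g i).card ≤ n - k
    have hnpos : (0 : ℝ) < n := Nat.cast_pos.mpr hn
    have hcard : ∀ z : ℝ, (αn ≤ empCDF n g z ↔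
        k ≤ (Finset.univ.filter fun i => g i ≤ z).card) := by
      intro z
      rw [empCDF, le_div_iff₀ hnpos, mul_comm, hkdef]
      exact (Nat.ceil_le).symm
    have hne : (Finset.univ : Finset (Fin n)).Nonempty := Finset.univ_nonempty
    have hTne : Set.Nonempty {z : ℝ | αn ≤ empCDF n g z} := by
      refine ⟨Finset.univ.sup' hne g, (hcard _).mpr ?_⟩
      have hall : (Finset.univ.filter fun i => g i ≤ Finset.univ.sup' hne g) = Finset.univ := by
        refine Finset.filter_true_of_mem fun i _ => ?_
        exact Finset.le_sup' g (Finset.mem_univ i)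
      rw [hall, Finset.card_univ, Fintype.card_fin]
      exact hkn
    have hTbdd : BddBelow {z : ℝ | αn ≤ empCDF n g z} := by
      refine ⟨Finset.univ.inf' hne g, fun z hz => ?_⟩
      have hkz := (hcard z).mp hz
      have hfne : (Finset.univ.filter fun i => g i ≤ z).Nonempty :=
        Finset.card_pos.mp (lt_of_lt_of_le hk1 hkz)
      obtain ⟨i, hi⟩ := hfne
      exact le_trans (Finset.inf'_le g (Finset.mem_univ i)) (Finset.mem_filter.mp hi).2
    have hsplit : (Finset.univ.filter fun i => g i < q).card
        + (Finset.univ.filter fun i => q ≤ g i).card = n := by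
      have h := Finset.card_filter_add_card_filter_not
        (s := (Finset.univ : Finset (Fin n))) (p := fun i => g i < q)
      simpa [not_lt, Finset.card_univ] using h
    have hlt : empQuantile n g αn < q ↔
        k ≤ (Finset.univ.filter fun i => g i < q).card := by
      rw [empQuantile]
      constructor
      · intro h
        obtain ⟨z, hzT, hzq⟩ := exists_lt_of_csInf_lt hTne h
        refine le_trans ((hcard z).mp hzT) (Finset.card_le_card ?_)
        intro i hi
        rw [Finset.mem_filter] at hi ⊢
        exact ⟨hi.1, lt_of_le_of_lt hi.2 hzq⟩
      · intro h
        have hfne : (Finset.univ.filter fun i => g i < q).Nonempty :=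
          Finset.card_pos.mp (lt_of_lt_of_le hk1 h)
        set z := (Finset.univ.filter fun i => g i < q).sup' hfne g with hz
        have hzq : z < q := by
          rw [hz, Finset.sup'_lt_iff]
          exact fun i hi => (Finset.mem_filter.mp hi).2
        have hzT : z ∈ {z : ℝ | αn ≤ empCDF n g z} := by
          refine (hcard z).mpr (le_trans h (Finset.card_le_card ?_))
          intro i hi
          rw [Finset.mem_filter] at hi ⊢
          exact ⟨hi.1, Finset.le_sup' g (Finset.mem_filter.mpr hi)⟩
        exact lt_of_le_of_lt (csInf_le hTbdd hzT) hzq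
    rw [hlt]
    constructor
    · intro h
      omega
    · intro h
      omega
  -- the decomposition into elementary events
  classical
  set E : Finset (Fin n) → Set Ω := fun s => {ω | (Finset.univ.filter fun i => q ≤ ζ i ω) = s}
    with hE
  set 𝒮 : Finset (Finset (Fin n)) := (Finset.range (n - k + 1)).biUnion
    (fun j => Finset.powersetCard j (Finset.univ : Finset (Fin n))) with h𝒮
  have hmem𝒮 : ∀ s : Finset (Fin n), s ∈ 𝒮 ↔ s.card ≤ n - k := by
    intro s
    rw [h𝒮, Finset.mem_biUnion]
    constructor
    · rintro ⟨j, hj, hsj⟩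
      rw [Finset.mem_powersetCard_univ] at hsj
      rw [hsj]
      exact Nat.lt_succ_iff.mp (Finset.mem_range.mp hj)
    · intro h
      exact ⟨s.card, Finset.mem_range.mpr (Nat.lt_succ_of_le h), Finset.mem_powersetCard_univ.mpr rfl⟩
  have hset : {ω | empQuantile n (fun i => ζ i ω) αn < q} = ⋃ s ∈ 𝒮, E s := by
    ext ω
    simp only [Set.mem_setOf_eq, Set.mem_iUnion, hEquiv ω]
    constructor
    · intro h
      exact ⟨_, (hmem𝒮 _).mpr h, rfl⟩
    · rintro ⟨s, hs, hsw⟩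
      have : (Finset.univ.filter fun i => q ≤ ζ i ω) = s := hsw
      rw [this]
      exact (hmem𝒮 _).mp hs
  have hEinter : ∀ s : Finset (Fin n),
      E s = ⋂ i, (if i ∈ s then ζ i ⁻¹' Set.Ici q else ζ i ⁻¹' Set.Iio q) := by
    intro s
    ext ω
    simp only [hE, Set.mem_setOf_eq, Set.mem_iInter]
    constructor
    · intro h i
      split_ifs with hi
      · have hi' : i ∈ Finset.univ.filter fun i => q ≤ ζ i ω := h ▸ hi
        exact (Finset.mem_filter.mp hi').2
      · have hi' : i ∉ Finset.univ.filter fun i => q ≤ ζ i ω := h ▸ hi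
        simp only [Set.mem_preimage, Set.mem_Iio]
        by_contra hcon
        push_neg at hcon
        exact hi' (Finset.mem_filter.mpr ⟨Finset.mem_univ i, hcon⟩)
    · intro h
      ext i
      simp only [Finset.mem_filter, Finset.mem_univ, true_and]
      have hi := h i
      split_ifs at hi with his
      · exact ⟨fun _ => his, fun _ => hi⟩
      · simp only [Set.mem_preimage, Set.mem_Iio] at hi
        exact ⟨fun hcon => absurd hcon (not_le.mpr hi), fun hcon => absurd hcon his⟩
  have hPE : ∀ s : Finset (Fin n),
      P (E s) = ENNReal.ofReal (1 - α) ^ s.card * ENNReal.ofReal α ^ (n - s.card) := by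
    intro s
    rw [hEinter s, hindep.meas_iInter (fun i => ?_)]
    · have hval : ∀ i, P (if i ∈ s then ζ i ⁻¹' Set.Ici q else ζ i ⁻¹' Set.Iio q)
          = (if i ∈ s then ENNReal.ofReal (1 - α) else ENNReal.ofReal α) := by
        intro i
        split_ifs
        · exact hBi i
        · exact hAi i
      simp_rw [hval]
      rw [Finset.prod_ite, Finset.prod_const, Finset.prod_const]
      have h1 : (Finset.univ.filter fun i => i ∈ s) = s := by
        ext i; simp
      have h2 : (Finset.univ.filter fun i => i ∈ s).card
          + (Finset.univ.filter fun i => ¬ i ∈ s).card = n := by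
        have h := Finset.card_filter_add_card_filter_not
          (s := (Finset.univ : Finset (Fin n))) (p := fun i => i ∈ s)
        simpa [Finset.card_univ] using h
      rw [h1] at h2 ⊢
      have h3 : (Finset.univ.filter fun i => ¬ i ∈ s).card = n - s.card := by omega
      rw [h3]
    · split_ifs
      · exact ⟨Set.Ici q, measurableSet_Ici, rfl⟩
      · exact ⟨Set.Iio q, measurableSet_Iio, rfl⟩
  have hEmeas : ∀ s : Finset (Fin n), MeasurableSet (E s) := by
    intro s
    rw [hEinter s]
    refine MeasurableSet.iInter fun i => ?_
    split_ifs
    · exact (hmeas i) measurableSet_Ici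
    · exact (hmeas i) measurableSet_Iio
  have hdisj : Set.PairwiseDisjoint (↑𝒮 : Set (Finset (Fin n))) E := by
    intro s _ t _ hst
    refine Set.disjoint_left.mpr fun ω hs ht => hst ?_
    have h1 : (Finset.univ.filter fun i => q ≤ ζ i ω) = s := hs
    have h2 : (Finset.univ.filter fun i => q ≤ ζ i ω) = t := ht
    rw [← h1, h2]
  have hdisj2 : Set.PairwiseDisjoint (↑(Finset.range (n - k + 1)) : Set ℕ)
      (fun j => Finset.powersetCard j (Finset.univ : Finset (Fin n))) := by
    intro a _ b _ hab
    refine Finset.disjoint_left.mpr fun s hsa hsb => hab ?_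
    rw [Finset.mem_powersetCard_univ] at hsa hsb
    rw [← hsa, hsb]
  have key : P {ω | empQuantile n (fun i => ζ i ω) αn < q}
      = ∑ j ∈ Finset.range (n - k + 1),
          (n.choose j) * (ENNReal.ofReal (1 - α) ^ j * ENNReal.ofReal α ^ (n - j)) := by
    rw [hset, measure_biUnion_finset hdisj (fun s _ => hEmeas s), h𝒮,
      Finset.sum_biUnion hdisj2]
    refine Finset.sum_congr rfl fun j hj => ?_
    have hconst : ∀ s ∈ Finset.powersetCard j (Finset.univ : Finset (Fin n)),
        P (E s) = ENNReal.ofReal (1 - α) ^ j * ENNReal.ofReal α ^ (n - j) := by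
      intro s hs
      rw [hPE s, Finset.mem_powersetCard_univ.mp hs]
    rw [Finset.sum_congr rfl hconst, Finset.sum_const, Finset.card_powersetCard,
      Finset.card_univ, Fintype.card_fin, nsmul_eq_mul]
  rw [key, ENNReal.toReal_sum (fun j _ => by
    refine ENNReal.mul_ne_top (by simp) (ENNReal.mul_ne_top ?_ ?_) <;>
      exact ENNReal.pow_ne_top ENNReal.ofReal_ne_top)]
  refine Finset.sum_congr rfl fun j _ => ?_
  rw [ENNReal.toReal_mul, ENNReal.toReal_mul, ENNReal.toReal_pow, ENNReal.toReal_pow,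
    ENNReal.toReal_ofReal (by linarith), ENNReal.toReal_ofReal hα0.le, ENNReal.toReal_natCast,
    mul_assoc]
end

section
/- Let ζ be a real random variable with continuous CDF F, and ζ₁,...,ζₙ i.i.d. copies. Fix α ∈ (0,1), ε ∈ (0, 1-α), and αₙ ∈ (α, α+ε). Then P(F(F_n^{-1}(αₙ)) < α) ≤ exp(-n(αₙ - α)²/(2(1-α))). -/
open MeasureTheory ProbabilityTheory

lemma kl_ineq {a q : ℝ} (h0 : 0 < a) (haq : a < q) (h1 : q < 1) :
    (q - a) ^ 2 / (2 * (1 - a)) ≤ q * Real.log (q / a) + (1 - q) * Real.log ((1 - q) / (1 - a)) := by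
  have hq0 : 0 < q := h0.trans haq
  have h1a : 0 < 1 - a := by linarith
  have h1q : 0 < 1 - q := by linarith
  -- inner function h
  set h : ℝ → ℝ := fun x => Real.log x - Real.log (1 - x) - x / (1 - a) with hh
  have hderivh : ∀ x ∈ Set.Icc a q, HasDerivAt h (1 / x + 1 / (1 - x) - 1 / (1 - a)) x := by
    intro x hx
    have hx0 : 0 < x := lt_of_lt_of_le h0 hx.1
    have hx1 : 0 < 1 - x := by have := hx.2; linarith
    have d1 : HasDerivAt Real.log (1 / x) x := by
      simpa [one_div] using Real.hasDerivAt_log hx0.ne'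
    have d2 : HasDerivAt (fun y : ℝ => 1 - y) (-1) x := by
      simpa using (hasDerivAt_id x).const_sub 1
    have d3 : HasDerivAt (fun y : ℝ => Real.log (1 - y)) (x - 1)⁻¹ x := by
      have := (Real.hasDerivAt_log hx1.ne').comp x d2
      refine this.congr_deriv ?_
      rw [show x - 1 = -(1 - x) by ring, inv_neg]
      field_simp
    have d4 : HasDerivAt (fun y : ℝ => y / (1 - a)) (1 / (1 - a)) x := by
      simpa using (hasDerivAt_id x).div_const (1 - a)
    have := (d1.sub d3).sub d4
    refine this.congr_deriv ?_
    rw [show x - 1 = -(1 - x) by ring, inv_neg]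
    ring
  have hmono : MonotoneOn h (Set.Icc a q) := by
    apply monotoneOn_of_deriv_nonneg (convex_Icc a q)
    · exact fun x hx => (hderivh x hx).continuousAt.continuousWithinAt
    · intro x hx
      rw [interior_Icc] at hx
      exact (hderivh x (Set.Ioo_subset_Icc_self hx)).differentiableAt.differentiableWithinAt
    · intro x hx
      rw [interior_Icc] at hx
      rw [(hderivh x (Set.Ioo_subset_Icc_self hx)).deriv]
      have hx1 : 0 < 1 - x := by have := hx.2; linarith
      have hx0 : 0 < x := h0.trans hx.1
      have : 1 / (1 - a) ≤ 1 / (1 - x) := by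
        apply one_div_le_one_div_of_le hx1
        linarith [hx.1]
      have : 0 < 1 / x := by positivity
      linarith
  -- outer function φ
  set φ : ℝ → ℝ := fun x =>
    x * (Real.log x - Real.log a) + (1 - x) * (Real.log (1 - x) - Real.log (1 - a))
      - (x - a) ^ 2 / (2 * (1 - a)) with hφ
  have hderivφ : ∀ x ∈ Set.Icc a q, HasDerivAt φ (h x - h a) x := by
    intro x hx
    have hx0 : 0 < x := lt_of_lt_of_le h0 hx.1
    have hx1 : 0 < 1 - x := by have := hx.2; linarith
    have d1 : HasDerivAt (fun y : ℝ => y * (Real.log y - Real.log a))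
        (1 * (Real.log x - Real.log a) + x * (1 / x)) x := by
      have dl : HasDerivAt (fun y : ℝ => Real.log y - Real.log a) (1 / x) x := by
        simpa [one_div] using (Real.hasDerivAt_log hx0.ne').sub_const (Real.log a)
      exact (hasDerivAt_id x).mul dl
    have d2' : HasDerivAt (fun y : ℝ => 1 - y) (-1) x := by
      simpa using (hasDerivAt_id x).const_sub 1
    have dl2 : HasDerivAt (fun y : ℝ => Real.log (1 - y) - Real.log (1 - a)) ((1 - x)⁻¹ * (-1)) x := by
      exact (((Real.hasDerivAt_log hx1.ne').comp x d2')).sub_const (Real.log (1 - a))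
    have d2 : HasDerivAt (fun y : ℝ => (1 - y) * (Real.log (1 - y) - Real.log (1 - a)))
        ((-1) * (Real.log (1 - x) - Real.log (1 - a)) + (1 - x) * ((1 - x)⁻¹ * (-1))) x :=
      d2'.mul dl2
    have d3 : HasDerivAt (fun y : ℝ => (y - a) ^ 2 / (2 * (1 - a)))
        (2 * (x - a) ^ 1 * 1 / (2 * (1 - a))) x := by
      exact (((hasDerivAt_id x).sub_const a).pow 2).div_const (2 * (1 - a))
    have := (d1.add d2).sub d3
    refine this.congr_deriv ?_
    simp only [hh]
    field_simp
    ring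
  have hmonoφ : MonotoneOn φ (Set.Icc a q) := by
    apply monotoneOn_of_deriv_nonneg (convex_Icc a q)
    · exact fun x hx => (hderivφ x hx).continuousAt.continuousWithinAt
    · intro x hx
      rw [interior_Icc] at hx
      exact (hderivφ x (Set.Ioo_subset_Icc_self hx)).differentiableAt.differentiableWithinAt
    · intro x hx
      rw [interior_Icc] at hx
      rw [(hderivφ x (Set.Ioo_subset_Icc_self hx)).deriv]
      have := hmono (Set.left_mem_Icc.2 (le_of_lt haq)) (Set.Ioo_subset_Icc_self hx) hx.1.le
      linarith
  have h0φ : φ a = 0 := by simp [hφ]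
  have := hmonoφ (Set.left_mem_Icc.2 haq.le) (Set.right_mem_Icc.2 haq.le) haq.le
  rw [h0φ] at this
  rw [Real.log_div hq0.ne' h0.ne', Real.log_div h1q.ne' h1a.ne']
  simp only [hφ] at this
  linarith

/-- `P(F(F_n^{-1}(αₙ)) < α) ≤ exp(-n(αₙ - α)²/(2(1-α)))` for an i.i.d. sample with
continuous CDF `F`, `α ∈ (0,1)`, `ε ∈ (0,1-α)` and `αₙ ∈ (α, α+ε)`. -/
theorem mass_undershoot_bound
    {Ω : Type*} [MeasurableSpace Ω] (P : Measure Ω) [IsProbabilityMeasure P]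
    (n : ℕ) (hn : 0 < n) (ζ : Fin n → Ω → ℝ) (hmeas : ∀ i, Measurable (ζ i))
    (hindep : iIndepFun ζ P)
    (μ : Measure ℝ) (hident : ∀ i, P.map (ζ i) = μ)
    (F : ℝ → ℝ) (hF : ∀ z, F z = (μ (Set.Iic z)).toReal) (hFcont : Continuous F)
    (α ε αn : ℝ) (hα : α ∈ Set.Ioo (0 : ℝ) 1) (hε : ε ∈ Set.Ioo 0 (1 - α))
    (hαn : αn ∈ Set.Ioo α (α + ε)) :
    (P {ω | F (empQuantile n (fun i => ζ i ω) αn) < α}).toReal ≤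
      Real.exp (-(n : ℝ) * (αn - α) ^ 2 / (2 * (1 - α))) := by
  obtain ⟨hα0, hα1⟩ := hα
  obtain ⟨hε0, hε1⟩ := hε
  obtain ⟨hq, hqε⟩ := hαn
  have hq0 : 0 < αn := hα0.trans hq
  have hq1 : αn < 1 := by linarith
  have h1a : 0 < 1 - α := by linarith
  have h1q : 0 < 1 - αn := by linarith
  have hn' : (0:ℝ) < n := Nat.cast_pos.2 hn
  haveI : IsProbabilityMeasure μ := by
    rw [← hident ⟨0, hn⟩]
    exact Measure.isProbabilityMeasure_map (hmeas _).aemeasurable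
  -- the set A = {x | F x < α}
  set A : Set ℝ := {x | F x < α} with hAdef
  have hAmeas : MeasurableSet A := (isOpen_lt hFcont continuous_const).measurableSet
  have hFmono : Monotone F := fun x y hxy => by
    rw [hF, hF]
    exact ENNReal.toReal_mono (measure_ne_top μ _) (measure_mono (Set.Iic_subset_Iic.2 hxy))
  -- μ A ≤ α
  have hμA : μ A ≤ ENNReal.ofReal α := by
    rcases Set.eq_empty_or_nonempty A with hAe | hAne
    · simp [hAe]
    · have hT : Filter.Tendsto F Filter.atTop (nhds 1) := by
        have h1 := MeasureTheory.tendsto_measure_Iic_atTop μ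
        rw [measure_univ] at h1
        have h2 := (ENNReal.tendsto_toReal (by norm_num : (1 : ENNReal) ≠ ⊤)).comp h1
        simp only [ENNReal.toReal_one, Function.comp] at h2
        exact h2.congr fun z => (hF z).symm
      obtain ⟨M, hM⟩ := (hT.eventually (eventually_gt_nhds hα1)).exists
      have hbdd : BddAbove A := by
        refine ⟨M, fun x hx => ?_⟩
        by_contra hxM
        push_neg at hxM
        exact absurd (hFmono hxM.le) (not_le.2 (lt_trans hx hM))
      set c := sSup A with hc
      have hcα : F c ≤ α := by
        by_contra hcα
        push_neg at hcα
        have hU : IsOpen {y | α < F y} := isOpen_lt continuous_const hFcont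
        obtain ⟨δ, hδ0, hball⟩ := Metric.isOpen_iff.mp hU c hcα
        obtain ⟨x, hxA, hxgt⟩ := exists_lt_of_lt_csSup hAne (by linarith : c - δ < c)
        have hxle : x ≤ c := le_csSup hbdd hxA
        have hxball : x ∈ Metric.ball c δ := by
          rw [Metric.mem_ball, Real.dist_eq, abs_sub_lt_iff]
          constructor <;> linarith
        have := hball hxball
        exact absurd this (by simpa using not_lt.2 hxA.le)
      calc μ A ≤ μ (Set.Iic c) := measure_mono fun x hx => le_csSup hbdd hx
        _ = ENNReal.ofReal (F c) := by
            rw [hF]; exact (ENNReal.ofReal_toReal (measure_ne_top μ _)).symm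
        _ ≤ ENNReal.ofReal α := ENNReal.ofReal_le_ofReal hcα
  set p : ℝ := (μ A).toReal with hpdef
  have hp : p ≤ α := by
    rw [hpdef]
    calc (μ A).toReal ≤ (ENNReal.ofReal α).toReal :=
          ENNReal.toReal_mono ENNReal.ofReal_ne_top hμA
      _ = α := ENNReal.toReal_ofReal hα0.le
  have hp0 : 0 ≤ p := ENNReal.toReal_nonneg
  -- the indicator variables
  set Y : Fin n → Ω → ℝ := fun i ω => if F (ζ i ω) < α then (1:ℝ) else 0 with hYdef
  have hg : Measurable (fun x : ℝ => if F x < α then (1:ℝ) else 0) :=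
    Measurable.ite hAmeas measurable_const measurable_const
  have hYmeas : ∀ i, Measurable (Y i) := fun i => hg.comp (hmeas i)
  have hYindep : iIndepFun Y P := by
    have := hindep.comp (fun _ x => if F x < α then (1:ℝ) else 0) (fun _ => hg)
    exact this
  set t : ℝ := Real.log (αn * (1 - α) / (α * (1 - αn))) with htdef
  have hratio1 : 1 ≤ αn * (1 - α) / (α * (1 - αn)) := by
    rw [le_div_iff₀ (by positivity)]
    nlinarith
  have ht : 0 ≤ t := Real.log_nonneg hratio1
  have het : Real.exp t = αn * (1 - α) / (α * (1 - αn)) :=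
    Real.exp_log (by positivity)
  set B : ℝ := 1 - α + α * Real.exp t with hBdef
  have hB : B = (1 - α) / (1 - αn) := by
    rw [hBdef, het]
    field_simp
    ring
  have hBpos : 0 < B := by rw [hB]; positivity
  -- mgf computation
  have hSmeas : ∀ i, MeasurableSet (ζ i ⁻¹' A) := fun i => hmeas i hAmeas
  have hPS : ∀ i, (P (ζ i ⁻¹' A)).toReal = p := fun i => by
    rw [hpdef, ← hident i, Measure.map_apply (hmeas i) hAmeas]
  have heq : ∀ i, (fun ω => Real.exp (t * Y i ω)) =
      fun ω => (ζ i ⁻¹' A).indicator (fun _ => Real.exp t - 1) ω + 1 := by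
    intro i
    funext ω
    by_cases hω : F (ζ i ω) < α
    · have hmem : ω ∈ ζ i ⁻¹' A := hω
      simp [hYdef, hω, Set.indicator_of_mem hmem]
    · have hmem : ω ∉ ζ i ⁻¹' A := hω
      simp [hYdef, hω, Set.indicator_of_notMem hmem]
  have hint : ∀ i, Integrable (fun ω => Real.exp (t * Y i ω)) P := by
    intro i
    rw [heq i]
    exact ((integrable_const _).indicator (hSmeas i)).add (integrable_const 1)
  have hmgf : ∀ i, mgf (Y i) P t = (Real.exp t - 1) * p + 1 := by
    intro i
    rw [mgf, heq i, integral_add ((integrable_const _).indicator (hSmeas i)) (integrable_const 1),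
      integral_indicator_const _ (hSmeas i), integral_const, probReal_univ]
    simp [measureReal_def, hPS i, mul_comm]
  have hmgfB : ∀ i, mgf (Y i) P t ≤ B := by
    intro i
    rw [hmgf i, hBdef]
    have h1 : (1:ℝ) ≤ Real.exp t := Real.one_le_exp ht
    nlinarith
  -- Chernoff
  have hintsum : Integrable (fun ω => Real.exp (t * (∑ i, Y i) ω)) P :=
    hYindep.integrable_exp_mul_sum hYmeas (fun i _ => hint i)
  have hcher := measure_ge_le_exp_mul_mgf (μ := P) (X := ∑ i, Y i) ((n:ℝ) * αn) ht hintsum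
  have hmgfsum : mgf (∑ i, Y i) P t ≤ B ^ n := by
    rw [hYindep.mgf_sum hYmeas]
    calc ∏ i, mgf (Y i) P t ≤ ∏ _i : Fin n, B :=
          Finset.prod_le_prod (fun i _ => mgf_nonneg) (fun i _ => hmgfB i)
      _ = B ^ n := by simp
  -- event inclusion
  have hsub : {ω | F (empQuantile n (fun i => ζ i ω) αn) < α} ⊆
      {ω | (n:ℝ) * αn ≤ (∑ i, Y i) ω} := by
    intro ω hω
    simp only [Set.mem_setOf_eq] at hω ⊢
    rw [Finset.sum_apply]
    set ζω : Fin n → ℝ := fun i => ζ i ω with hζω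
    set Q : ℝ := empQuantile n ζω αn with hQ
    have huniv : (Finset.univ : Finset (Fin n)).Nonempty := ⟨⟨0, hn⟩, Finset.mem_univ _⟩
    have hSne : Set.Nonempty {z | αn ≤ empCDF n ζω z} := by
      refine ⟨Finset.univ.sup' huniv ζω, ?_⟩
      have : (Finset.univ.filter fun i => ζω i ≤ Finset.univ.sup' huniv ζω) = Finset.univ := by
        refine Finset.filter_true_of_mem fun i _ => ?_
        exact Finset.le_sup' ζω (Finset.mem_univ i)
      simp only [Set.mem_setOf_eq, empCDF, this, Finset.card_univ, Fintype.card_fin]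
      rw [div_self hn'.ne']
      linarith
    set K := Finset.univ.filter fun i => ζω i ≤ Q with hK
    have hKcard : (n:ℝ) * αn ≤ (K.card : ℝ) := by
      by_cases hT : (Finset.univ.filter fun i => Q < ζω i).Nonempty
      · set δ := (Finset.univ.filter fun i => Q < ζω i).inf' hT ζω with hδ
        have hQδ : Q < δ := by
          rw [hδ, Finset.lt_inf'_iff]
          exact fun i hi => (Finset.mem_filter.1 hi).2
        obtain ⟨z, hzS, hzδ⟩ := exists_lt_of_csInf_lt hSne hQδ
        have hz : αn ≤ empCDF n ζω z := hzS
        have hsub2 : (Finset.univ.filter fun i => ζω i ≤ z) ⊆ K := by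
          intro i hi
          rw [Finset.mem_filter] at hi ⊢
          refine ⟨Finset.mem_univ _, ?_⟩
          by_contra hQi
          push_neg at hQi
          have : δ ≤ ζω i :=
            Finset.inf'_le ζω (Finset.mem_filter.2 ⟨Finset.mem_univ _, hQi⟩)
          linarith [hi.2]
        have h1 : (n:ℝ) * αn ≤ ((Finset.univ.filter fun i => ζω i ≤ z).card : ℝ) := by
          rw [empCDF, le_div_iff₀ hn'] at hz
          linarith
        have h2 : ((Finset.univ.filter fun i => ζω i ≤ z).card : ℝ) ≤ (K.card : ℝ) :=
          Nat.cast_le.2 (Finset.card_le_card hsub2)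
        linarith
      · rw [Finset.not_nonempty_iff_eq_empty, Finset.filter_eq_empty_iff] at hT
        have : K = Finset.univ := by
          refine Finset.filter_true_of_mem fun i hi => ?_
          have := hT hi
          push_neg at this
          exact this
        rw [this, Finset.card_univ, Fintype.card_fin]
        nlinarith
    have hYone : ∀ i ∈ K, Y i ω = 1 := by
      intro i hi
      have hile : ζω i ≤ Q := (Finset.mem_filter.1 hi).2
      have : F (ζω i) < α := lt_of_le_of_lt (hFmono hile) hω
      simp [hYdef, show F (ζ i ω) < α from this]
    calc (n:ℝ) * αn ≤ (K.card : ℝ) := hKcard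
      _ = ∑ i ∈ K, Y i ω := by
          rw [Finset.sum_congr rfl hYone]
          simp
      _ ≤ ∑ i, Y i ω := by
          refine Finset.sum_le_sum_of_subset_of_nonneg (Finset.subset_univ K) fun i _ _ => ?_
          simp only [hYdef]
          split <;> norm_num
  -- final computation
  have hKL : Real.log B - t * αn =
      -(αn * Real.log (αn / α) + (1 - αn) * Real.log ((1 - αn) / (1 - α))) := by
    rw [hB, htdef, Real.log_div h1a.ne' h1q.ne',
      Real.log_div (by positivity) (by positivity),
      Real.log_mul hq0.ne' h1a.ne', Real.log_mul hα0.ne' h1q.ne',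
      Real.log_div hq0.ne' hα0.ne', Real.log_div h1q.ne' h1a.ne']
    ring
  have hklb := kl_ineq hα0 hq hq1
  calc (P {ω | F (empQuantile n (fun i => ζ i ω) αn) < α}).toReal
      ≤ (P {ω | (n:ℝ) * αn ≤ (∑ i, Y i) ω}).toReal :=
        ENNReal.toReal_mono (measure_ne_top _ _) (measure_mono hsub)
    _ ≤ Real.exp (-t * ((n:ℝ) * αn)) * mgf (∑ i, Y i) P t := hcher
    _ ≤ Real.exp (-t * ((n:ℝ) * αn)) * B ^ n := by
        exact mul_le_mul_of_nonneg_left hmgfsum (Real.exp_nonneg _)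
    _ = Real.exp ((n:ℝ) * (Real.log B - t * αn)) := by
        have hBn : B ^ n = Real.exp ((n:ℝ) * Real.log B) := by
          rw [Real.exp_nat_mul, Real.exp_log hBpos]
        rw [hBn, ← Real.exp_add]
        congr 1
        ring
    _ ≤ Real.exp (-(n : ℝ) * (αn - α) ^ 2 / (2 * (1 - α))) := by
        rw [Real.exp_le_exp, hKL]
        have hn0 : (0:ℝ) ≤ n := Nat.cast_nonneg n
        have := mul_le_mul_of_nonneg_left hklb hn0
        have heq2 : -(n:ℝ) * (αn - α) ^ 2 / (2 * (1 - α)) =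
            -((n:ℝ) * ((αn - α) ^ 2 / (2 * (1 - α)))) := by ring
        rw [heq2]
        linarith
end

section
/- Let ζ be a real random variable with continuous CDF F, and ζ₁,...,ζₙ i.i.d. copies. Fix α ∈ (0,1), ε ∈ (0, 1-α), and αₙ ∈ (α, α+ε). Then P(F(F_n^{-1}(αₙ)) > α + ε) ≤ exp(-n(α + ε - αₙ)²/(2(α + ε))). -/
open MeasureTheory ProbabilityTheory

lemma aux_log {u : ℝ} (h0 : 0 < u) (h1 : u ≤ 1) : (u ^ 2 - 1) / (2 * u) ≤ Real.log u := by
  set g : ℝ → ℝ := fun u => Real.log u - u / 2 + 2⁻¹ * u⁻¹ with hg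
  have hderiv : ∀ x : ℝ, 0 < x → HasDerivAt g (x⁻¹ - 1 / 2 + 2⁻¹ * (-(x ^ 2)⁻¹)) x := by
    intro x hx
    exact ((Real.hasDerivAt_log hx.ne').sub ((hasDerivAt_id x).div_const 2)).add
      ((hasDerivAt_inv hx.ne').const_mul 2⁻¹)
  have hanti : AntitoneOn g (Set.Ioi 0) := by
    refine antitoneOn_of_deriv_nonpos (convex_Ioi 0) ?_ ?_ ?_
    · intro x hx
      exact ((hderiv x hx).continuousAt).continuousWithinAt
    · intro x hx
      rw [interior_Ioi] at hx
      exact ((hderiv x hx).differentiableAt).differentiableWithinAt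
    · intro x hx
      rw [interior_Ioi] at hx
      have hx0 : (0:ℝ) < x := hx
      rw [(hderiv x hx).deriv]
      have heq : x⁻¹ - 1 / 2 + 2⁻¹ * -(x ^ 2)⁻¹ = -((x - 1) ^ 2) / (2 * x ^ 2) := by
        field_simp
        ring
      rw [heq]
      apply div_nonpos_of_nonpos_of_nonneg (by nlinarith [sq_nonneg (x-1)]) (by positivity)
  have h := hanti (Set.mem_Ioi.mpr h0) (Set.mem_Ioi.mpr one_pos) h1
  have hg1 : g 1 = 0 := by simp [hg]
  rw [hg1] at h
  have : 0 ≤ Real.log u - u / 2 + 2⁻¹ * u⁻¹ := h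
  rw [div_le_iff₀ (by positivity)]
  nlinarith [mul_nonneg this h0.le, mul_inv_cancel₀ h0.ne']

lemma aux_key {p q : ℝ} (hp0 : 0 < p) (hq0 : 0 < q) (hqp : q ≤ p) :
    q - p - q * Real.log (q / p) ≤ -((p - q) ^ 2) / (2 * p) := by
  have hu0 : 0 < q / p := by positivity
  have hu1 : q / p ≤ 1 := by rw [div_le_one hp0]; exact hqp
  have h := aux_log hu0 hu1
  have h2 : q ^ 2 - p ^ 2 ≤ 2 * p * q * Real.log (q / p) := by
    have heq : 2 * p * q * (((q / p) ^ 2 - 1) / (2 * (q / p))) = q ^ 2 - p ^ 2 := by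
      field_simp
    nlinarith [mul_le_mul_of_nonneg_left h (by positivity : (0:ℝ) ≤ 2 * p * q)]
  rw [le_div_iff₀ (by positivity : (0:ℝ) < 2 * p)]
  nlinarith [h2]

/-- `P(F(F_n^{-1}(αₙ)) > α + ε) ≤ exp(-n(α + ε - αₙ)²/(2(α + ε)))` for an i.i.d. sample with
continuous CDF `F`, `α ∈ (0,1)`, `ε ∈ (0,1-α)` and `αₙ ∈ (α, α+ε)`. -/
theorem mass_overshoot_bound
    {Ω : Type*} [MeasurableSpace Ω] (P : Measure Ω) [IsProbabilityMeasure P]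
    (n : ℕ) (hn : 0 < n) (ζ : Fin n → Ω → ℝ) (hmeas : ∀ i, Measurable (ζ i))
    (hindep : iIndepFun ζ P)
    (μ : Measure ℝ) (hident : ∀ i, P.map (ζ i) = μ)
    (F : ℝ → ℝ) (hF : ∀ z, F z = (μ (Set.Iic z)).toReal) (hFcont : Continuous F)
    (α ε αn : ℝ) (hα : α ∈ Set.Ioo (0 : ℝ) 1) (hε : ε ∈ Set.Ioo 0 (1 - α))
    (hαn : αn ∈ Set.Ioo α (α + ε)) :
    (P {ω | α + ε < F (empQuantile n (fun i => ζ i ω) αn)}).toReal ≤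
      Real.exp (-(n : ℝ) * (α + ε - αn) ^ 2 / (2 * (α + ε))) := by
  obtain ⟨hα0, hα1⟩ := hα
  obtain ⟨hε0, hε1⟩ := hε
  obtain ⟨hαn1, hαn2⟩ := hαn
  set p : ℝ := α + ε with hp
  have hp0 : 0 < p := by positivity
  have hp1 : p < 1 := by simp only [hp]; linarith
  have hαn0 : 0 < αn := lt_trans hα0 hαn1
  have hμ : IsProbabilityMeasure μ := by
    rw [← hident ⟨0, hn⟩]
    exact Measure.isProbabilityMeasure_map (hmeas _).aemeasurable
  have hFmono : Monotone F := by
    intro a b hab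
    rw [hF a, hF b]
    exact ENNReal.toReal_mono (measure_ne_top μ _) (measure_mono (Set.Iic_subset_Iic.2 hab))
  -- existence of z with F z = p
  have htop : Filter.Tendsto F Filter.atTop (nhds 1) := by
    have h := tendsto_measure_Iic_atTop (μ := μ)
    rw [measure_univ] at h
    have h2 := (ENNReal.tendsto_toReal (by norm_num : (1:ENNReal) ≠ ⊤)).comp h
    simp only [Function.comp_def, ENNReal.toReal_one] at h2
    have : F = fun x => (μ (Set.Iic x)).toReal := funext hF
    rw [this]
    exact h2
  have hbot : Filter.Tendsto F Filter.atBot (nhds 0) := by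
    have hIic : ⋂ x : ℝ, Set.Iic x = ∅ := by
      ext y
      simp only [Set.mem_iInter, Set.mem_Iic, Set.mem_empty_iff_false, iff_false, not_forall,
        not_le]
      exact ⟨y - 1, by linarith⟩
    have h := tendsto_measure_iInter_atBot (μ := μ) (s := fun x : ℝ => Set.Iic x)
      (fun _ => measurableSet_Iic.nullMeasurableSet) monotone_Iic ⟨0, measure_ne_top μ _⟩
    rw [hIic, measure_empty] at h
    have h2 := (ENNReal.tendsto_toReal (by norm_num : (0:ENNReal) ≠ ⊤)).comp h
    simp only [Function.comp_def, ENNReal.toReal_zero] at h2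
    have : F = fun x => (μ (Set.Iic x)).toReal := funext hF
    rw [this]
    exact h2
  obtain ⟨b, hb⟩ := (htop.eventually (eventually_gt_nhds hp1)).exists
  obtain ⟨a, ha⟩ := (hbot.eventually (eventually_lt_nhds hp0)).exists
  have hab : a ≤ b := by
    by_contra hba
    push_neg at hba
    exact absurd (hFmono hba.le) (by linarith)
  obtain ⟨z, _, hz⟩ := intermediate_value_Icc hab hFcont.continuousOn ⟨ha.le, hb.le⟩
  -- indicator variables
  set f : ℝ → ℝ := fun x => if x ≤ z then 1 else 0 with hfdef
  set X : Fin n → Ω → ℝ := fun i => f ∘ ζ i with hXdef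
  have hfmeas : Measurable f := by
    apply Measurable.ite measurableSet_Iic measurable_const measurable_const
  have hXmeas : ∀ i, Measurable (X i) := fun i => hfmeas.comp (hmeas i)
  have hXindep : iIndepFun X P := hindep.comp (fun _ => f) (fun _ => hfmeas)
  have hXind : ∀ i, X i = (ζ i ⁻¹' Set.Iic z).indicator (fun _ => (1:ℝ)) := by
    intro i
    funext ω
    simp only [hXdef, Function.comp_apply, hfdef, Set.indicator, Set.mem_preimage, Set.mem_Iic]
  have hPA : ∀ i, (P (ζ i ⁻¹' Set.Iic z)).toReal = p := by
    intro i
    rw [← Measure.map_apply (hmeas i) measurableSet_Iic, hident i, ← hF z, hz]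
  have hXint : ∀ i, Integrable (X i) P := by
    intro i
    rw [hXind i]
    exact (integrable_const (1:ℝ)).indicator ((hmeas i) measurableSet_Iic)
  have hintX : ∀ i, ∫ ω, X i ω ∂P = p := by
    intro i
    rw [hXind i, integral_indicator_const (1:ℝ) ((hmeas i) measurableSet_Iic), smul_eq_mul,
      mul_one]
    exact hPA i
  -- event inclusion
  have hsub : {ω | p < F (empQuantile n (fun i => ζ i ω) αn)} ⊆
      {ω | (∑ i, X i) ω ≤ n * αn} := by
    intro ω hω
    simp only [Set.mem_setOf_eq] at hω ⊢
    have hz1 : z < empQuantile n (fun i => ζ i ω) αn := by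
      by_contra hle
      push_neg at hle
      have := hFmono hle
      rw [hz] at this
      exact absurd hω (not_lt.mpr this)
    have hz2 : empCDF n (fun i => ζ i ω) z < αn := by
      by_contra hmem
      push_neg at hmem
      have hbdd : BddBelow {z' : ℝ | αn ≤ empCDF n (fun i => ζ i ω) z'} := by
        have hne : Nonempty (Fin n) := ⟨⟨0, hn⟩⟩
        refine ⟨Finset.univ.inf' Finset.univ_nonempty (fun i => ζ i ω), ?_⟩
        intro z' hz'
        by_contra hlt
        push_neg at hlt
        have hcard : (Finset.univ.filter (fun i => ζ i ω ≤ z')).card = 0 := by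
          rw [Finset.card_eq_zero, Finset.filter_eq_empty_iff]
          intro i _
          exact not_le.mpr (lt_of_lt_of_le hlt (Finset.inf'_le _ (Finset.mem_univ i)))
        rw [Set.mem_setOf_eq, empCDF, hcard] at hz'
        norm_num at hz'
        linarith
      have hle := csInf_le hbdd hmem
      exact absurd hle (not_le.mpr hz1)
    have hS : (∑ i, X i) ω = ((Finset.univ.filter (fun i => ζ i ω ≤ z)).card : ℝ) := by
      simp [hXdef, hfdef, Finset.sum_apply]
    rw [hS]
    rw [empCDF, div_lt_iff₀ (by exact_mod_cast hn : (0:ℝ) < n)] at hz2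
    linarith [hz2]
  -- Chernoff bound
  set t : ℝ := Real.log (αn / p) with htdef
  have ht : t ≤ 0 := Real.log_nonpos (by positivity) (by rw [div_le_one hp0]; linarith)
  have het : Real.exp t = αn / p := Real.exp_log (by positivity)
  have hexp_eq : ∀ i, (fun ω => Real.exp (t * X i ω)) =
      fun ω => (Real.exp t - 1) * X i ω + 1 := by
    intro i
    funext ω
    simp only [hXdef, Function.comp_apply, hfdef]
    split_ifs with h
    · simp
    · simp
  have hexp_int : ∀ i, Integrable (fun ω => Real.exp (t * X i ω)) P := by
    intro i
    rw [hexp_eq i]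
    exact ((hXint i).const_mul _).add (integrable_const 1)
  have hmgf : ∀ i, mgf (X i) P t = (Real.exp t - 1) * p + 1 := by
    intro i
    rw [mgf]
    rw [hexp_eq i]
    rw [integral_add (((hXint i).const_mul _)) (integrable_const 1), integral_const_mul,
      hintX i, integral_const]
    simp
  have hsum_int : Integrable (fun ω => Real.exp (t * (∑ i, X i) ω)) P :=
    hXindep.integrable_exp_mul_sum hXmeas (fun i _ => hexp_int i)
  have hchern := measure_le_le_exp_mul_mgf (μ := P) (X := ∑ i, X i) (n * αn) ht hsum_int
  have hmgfsum : mgf (∑ i, X i) P t = ((Real.exp t - 1) * p + 1) ^ n := by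
    rw [hXindep.mgf_sum hXmeas]
    simp [hmgf]
  have hbase : 0 ≤ (Real.exp t - 1) * p + 1 := by
    rw [het]
    have h1 : (αn / p - 1) * p = αn - p := by field_simp
    nlinarith [h1]
  calc (P {ω | p < F (empQuantile n (fun i => ζ i ω) αn)}).toReal
      ≤ (P {ω | (∑ i, X i) ω ≤ n * αn}).toReal :=
        ENNReal.toReal_mono (measure_ne_top _ _) (measure_mono hsub)
    _ ≤ Real.exp (-t * (n * αn)) * ((Real.exp t - 1) * p + 1) ^ n := by
        rw [← hmgfsum]; exact hchern
    _ ≤ Real.exp (-t * (n * αn)) * (Real.exp ((Real.exp t - 1) * p)) ^ n := by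
        gcongr
        exact Real.add_one_le_exp _
    _ = Real.exp ((n : ℝ) * ((Real.exp t - 1) * p - t * αn)) := by
        rw [← Real.exp_nat_mul, ← Real.exp_add]
        ring_nf
    _ ≤ Real.exp (-(n : ℝ) * (p - αn) ^ 2 / (2 * p)) := by
        apply Real.exp_le_exp.mpr
        have hkey := aux_key hp0 hαn0 (le_of_lt hαn2)
        rw [← htdef] at hkey
        have h1 : (Real.exp t - 1) * p = αn - p := by rw [het]; field_simp
        rw [h1]
        have h2 : -(n : ℝ) * (p - αn) ^ 2 / (2 * p) = (n : ℝ) * (-((p - αn) ^ 2) / (2 * p)) := by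
          ring
        rw [h2]
        apply mul_le_mul_of_nonneg_left _ (Nat.cast_nonneg n)
        linarith [hkey]
end

section
/- Let ζ have continuous CDF F, and let δ ∈ (0,1), α ∈ (0,1), ε ∈ (0, 1-α), λ ∈ (0,1). Set αₙ = α + λε. If n ≥ c(λ, α, ε)·(2/ε²)·ln(2/δ), where c(λ, α, ε) = max{(1-α)/λ², (α+ε)/(1-λ)²}, then P(α ≤ F(F_n^{-1}(αₙ)) ≤ α + ε) ≥ 1 - δ. -/
open MeasureTheory ProbabilityTheory

lemma aux_xlogx {x : ℝ} (hx : 0 < x) (hx1 : x ≤ 1) : (x ^ 2 - 1) / 2 ≤ x * Real.log x := by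
  have hl : Real.log x ≤ 0 := Real.log_nonpos hx.le hx1
  have hs : (-Real.log x) ≤ Real.sinh (-Real.log x) := Real.self_le_sinh_iff.2 (by linarith)
  rw [Real.sinh_eq] at hs
  have hex : Real.exp (Real.log x) = x := Real.exp_log hx
  rw [neg_neg, Real.exp_neg, hex] at hs
  have hinv : x * x⁻¹ = 1 := mul_inv_cancel₀ hx.ne'
  nlinarith [hs, hx, mul_le_mul_of_nonneg_left hs hx.le]

lemma empQuantile_spec {n : ℕ} (hn : 0 < n) (ξ : Fin n → ℝ) {γ : ℝ}
    (hγ0 : 0 < γ) (hγ1 : γ ≤ 1) :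
    γ ≤ empCDF n ξ (empQuantile n ξ γ) ∧
      ∀ z, z < empQuantile n ξ γ → empCDF n ξ z < γ := by
  classical
  have hne : (Finset.univ : Finset (Fin n)).Nonempty := ⟨⟨0, hn⟩, Finset.mem_univ _⟩
  set S := {z : ℝ | γ ≤ empCDF n ξ z} with hSdef
  have hnn : (0:ℝ) < (n:ℝ) := Nat.cast_pos.2 hn
  have hmemS : ∀ z ∈ S, ∃ i : Fin n, ξ i ≤ z ∧ ξ i ∈ S := by
    intro z hz
    have hz' : γ ≤ empCDF n ξ z := hz
    have hcard : 0 < (Finset.univ.filter (fun i => ξ i ≤ z)).card := by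
      by_contra hc
      push_neg at hc
      have h0 : (Finset.univ.filter (fun i => ξ i ≤ z)).card = 0 := Nat.le_zero.1 (Nat.lt_succ_iff.1 (Nat.lt_succ_of_le hc)) 
      rw [empCDF, h0] at hz'
      simp at hz'
      linarith
    obtain ⟨j, hjmem⟩ := Finset.card_pos.1 hcard
    have hTz : (Finset.univ.filter (fun i => ξ i ≤ z)).Nonempty := ⟨j, hjmem⟩
    obtain ⟨k, hkmem, hkeq⟩ := Finset.exists_mem_eq_sup' hTz ξ
    have hkz : ξ k ≤ z := (Finset.mem_filter.1 hkmem).2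
    refine ⟨k, hkz, ?_⟩
    have hfeq : Finset.univ.filter (fun i => ξ i ≤ ξ k) = Finset.univ.filter (fun i => ξ i ≤ z) := by
      ext i
      simp only [Finset.mem_filter, Finset.mem_univ, true_and]
      constructor
      · intro h; exact h.trans hkz
      · intro h
        have hmem : i ∈ Finset.univ.filter (fun i => ξ i ≤ z) :=
          Finset.mem_filter.2 ⟨Finset.mem_univ i, h⟩
        have := Finset.le_sup' ξ hmem
        rwa [hkeq] at this
    show γ ≤ empCDF n ξ (ξ k)
    rw [empCDF, hfeq]
    exact hz'
  have hz0 : (Finset.univ.sup' hne ξ) ∈ S := by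
    have hfeq : Finset.univ.filter (fun i => ξ i ≤ Finset.univ.sup' hne ξ) = Finset.univ := by
      ext i
      simp only [Finset.mem_filter, Finset.mem_univ, true_and, iff_true]
      exact Finset.le_sup' ξ (Finset.mem_univ i)
    show γ ≤ empCDF n ξ _
    rw [empCDF, hfeq, Finset.card_univ, Fintype.card_fin, div_self hnn.ne']
    exact hγ1
  obtain ⟨i₁, _, hi₁S⟩ := hmemS _ hz0
  have hT : (Finset.univ.filter (fun i => ξ i ∈ S)).Nonempty :=
    ⟨i₁, Finset.mem_filter.2 ⟨Finset.mem_univ _, hi₁S⟩⟩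
  obtain ⟨j, hjT, hjeq⟩ := Finset.exists_mem_eq_inf' hT ξ
  have hjS : ξ j ∈ S := (Finset.mem_filter.1 hjT).2
  have hlb : ∀ z ∈ S, ξ j ≤ z := by
    intro z hz
    obtain ⟨i, hiz, hiS⟩ := hmemS z hz
    have : Finset.inf' _ hT ξ ≤ ξ i :=
      Finset.inf'_le ξ (Finset.mem_filter.2 ⟨Finset.mem_univ _, hiS⟩)
    rw [hjeq] at this
    exact this.trans hiz
  have hQ : empQuantile n ξ γ = ξ j := by
    apply le_antisymm
    · exact csInf_le ⟨ξ j, hlb⟩ hjS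
    · exact le_csInf ⟨_, hz0⟩ hlb
  constructor
  · rw [hQ]; exact hjS
  · intro z hz
    by_contra hc
    push_neg at hc
    have : ξ j ≤ z := hlb z hc
    rw [hQ] at hz
    linarith
lemma chernoff_lower {Ω : Type*} [MeasurableSpace Ω] (P : Measure Ω) [IsProbabilityMeasure P]
    (n : ℕ) (S : Fin n → Set Ω) (hS : ∀ i, MeasurableSet (S i))
    (hindep : iIndepFun
      (fun i => (S i).indicator (fun _ => (1:ℝ))) P)
    {ρ h : ℝ} (hρ : ∀ i, ρ ≤ (P (S i)).toReal)
    (hh : 0 < h) (hhρ : h < ρ) :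
    (P {ω | ∑ i, (S i).indicator (fun _ => (1:ℝ)) ω ≤ (n:ℝ) * (ρ - h)}).toReal
      ≤ Real.exp (-((n:ℝ) * h ^ 2 / (2 * ρ))) := by
  classical
  have hρ0 : 0 < ρ := hh.trans hhρ
  set u : ℝ := h / ρ with hu
  have hu0 : 0 < u := div_pos hh hρ0
  have hu1 : u < 1 := (div_lt_one hρ0).2 hhρ
  have h1u : (0:ℝ) < 1 - u := by linarith
  set t : ℝ := Real.log (1 - u) with ht
  have het : Real.exp t = 1 - u := Real.exp_log h1u
  have ht0 : t ≤ 0 := Real.log_nonpos (by linarith) (by linarith)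
  set X : Fin n → Ω → ℝ := fun i => (S i).indicator (fun _ => (1:ℝ)) with hX
  have hXmeas : ∀ i, Measurable (X i) := fun i => measurable_const.indicator (hS i)
  have hXint : ∀ i, Integrable (fun ω => Real.exp (t * X i ω)) P := by
    intro i
    refine ⟨((hXmeas i).const_mul t).exp.aestronglyMeasurable, ?_⟩
    apply MeasureTheory.HasFiniteIntegral.of_bounded (C := Real.exp |t|)
    filter_upwards with ω
    rw [Real.norm_eq_abs, abs_of_pos (Real.exp_pos _)]
    apply Real.exp_le_exp.2
    by_cases hw : ω ∈ S i
    · simp only [hX, Set.indicator_of_mem hw, mul_one]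
      exact le_abs_self t
    · simp only [hX, Set.indicator_of_notMem hw, mul_zero]
      exact abs_nonneg t
  have hmgf : ∀ i, mgf (X i) P t = 1 + (P (S i)).toReal * (Real.exp t - 1) := by
    intro i
    have hfun : (fun ω => Real.exp (t * X i ω))
        = fun ω => (S i).indicator (fun _ => Real.exp t - 1) ω + 1 := by
      funext ω
      by_cases hw : ω ∈ S i
      · simp [hX, Set.indicator_of_mem hw]
      · simp [hX, Set.indicator_of_notMem hw]
    rw [mgf, hfun, integral_add ((integrable_const _).indicator (hS i)) (integrable_const 1)]
    rw [integral_indicator_const _ (hS i), integral_const]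
    simp [measure_univ]
    simp only [measureReal_def]
    ring
  have hmgfle : ∀ i, mgf (X i) P t ≤ Real.exp (ρ * (Real.exp t - 1)) := by
    intro i
    rw [hmgf i]
    have het1 : Real.exp t - 1 ≤ 0 := by rw [het]; linarith
    have h1 : (P (S i)).toReal * (Real.exp t - 1) ≤ ρ * (Real.exp t - 1) :=
      mul_le_mul_of_nonpos_right (hρ i) het1
    have h2 := Real.add_one_le_exp (ρ * (Real.exp t - 1))
    linarith
  have hsum_int : Integrable (fun ω => Real.exp (t * (∑ i, X i) ω)) P :=
    hindep.integrable_exp_mul_sum hXmeas (fun i _ => hXint i)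
  have hch := measure_le_le_exp_mul_mgf (X := ∑ i, X i) (μ := P) ((n:ℝ) * (ρ - h)) ht0 hsum_int
  rw [hindep.mgf_sum hXmeas] at hch
  have hset : {ω | ∑ i, X i ω ≤ (n:ℝ) * (ρ - h)} = {ω | (∑ i, X i) ω ≤ (n:ℝ) * (ρ - h)} := by
    ext ω; simp [Finset.sum_apply]
  rw [hset]
  refine hch.trans ?_
  have hprod : ∏ i : Fin n, mgf (X i) P t ≤ Real.exp ((n:ℝ) * (ρ * (Real.exp t - 1))) := by
    calc ∏ i : Fin n, mgf (X i) P t ≤ ∏ _i : Fin n, Real.exp (ρ * (Real.exp t - 1)) :=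
          Finset.prod_le_prod (fun i _ => mgf_nonneg) (fun i _ => hmgfle i)
      _ = Real.exp ((n:ℝ) * (ρ * (Real.exp t - 1))) := by
          rw [Finset.prod_const, Finset.card_univ, Fintype.card_fin, ← Real.exp_nat_mul]
  have hkey : ρ * (Real.exp t - 1) - t * (ρ - h) ≤ -(h ^ 2 / (2 * ρ)) := by
    have hxl := aux_xlogx h1u (by linarith)
    have hρu : ρ * u = h := by rw [hu, mul_comm, div_mul_cancel₀ h hρ0.ne']
    have hρh : ρ - h = ρ * (1 - u) := by rw [mul_sub, mul_one, hρu]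
    have hρu2 : ρ * u ^ 2 = h ^ 2 / ρ := by
      rw [hu]; field_simp
    have hmul := mul_le_mul_of_nonneg_left hxl hρ0.le
    have e1 : ρ * (((1 - u) ^ 2 - 1) / 2) = ρ * u ^ 2 / 2 - ρ * u := by ring
    have e2 : h ^ 2 / (2 * ρ) = ρ * u ^ 2 / 2 := by rw [hρu2]; ring
    rw [het, ht, hρh, e2]
    nlinarith [hmul, hρu, e1]
  calc Real.exp (-t * ((n:ℝ) * (ρ - h))) * ∏ i : Fin n, mgf (X i) P t
      ≤ Real.exp (-t * ((n:ℝ) * (ρ - h))) * Real.exp ((n:ℝ) * (ρ * (Real.exp t - 1))) := by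
        exact mul_le_mul_of_nonneg_left hprod (Real.exp_pos _).le
    _ = Real.exp ((n:ℝ) * (ρ * (Real.exp t - 1) - t * (ρ - h))) := by
        rw [← Real.exp_add]; ring_nf
    _ ≤ Real.exp (-((n:ℝ) * h ^ 2 / (2 * ρ))) := by
        apply Real.exp_le_exp.2
        have := mul_le_mul_of_nonneg_left hkey (Nat.cast_nonneg n : (0:ℝ) ≤ n)
        calc (n:ℝ) * (ρ * (Real.exp t - 1) - t * (ρ - h)) ≤ (n:ℝ) * (-(h ^ 2 / (2 * ρ))) := this
          _ = -((n:ℝ) * h ^ 2 / (2 * ρ)) := by ring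
set_option maxHeartbeats 3000000 in
/-- Finite-sample coverage guarantee: with `αₙ = α + λε` and
`n ≥ c(λ,α,ε)(2/ε²)ln(2/δ)`, where `c(λ,α,ε) = max{(1-α)/λ², (α+ε)/(1-λ)²}`, the
probability that `F(F_n^{-1}(αₙ)) ∈ [α, α+ε]` is at least `1 - δ`. -/
theorem finite_sample_coverage
    {Ω : Type*} [MeasurableSpace Ω] (P : Measure Ω) [IsProbabilityMeasure P]
    (n : ℕ) (hn : 0 < n) (ζ : Fin n → Ω → ℝ) (hmeas : ∀ i, Measurable (ζ i))
    (hindep : iIndepFun ζ P)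
    (μ : Measure ℝ) (hident : ∀ i, P.map (ζ i) = μ)
    (F : ℝ → ℝ) (hF : ∀ z, F z = (μ (Set.Iic z)).toReal) (hFcont : Continuous F)
    (δ α ε lam : ℝ) (hδ : δ ∈ Set.Ioo (0 : ℝ) 1) (hα : α ∈ Set.Ioo (0 : ℝ) 1)
    (hε : ε ∈ Set.Ioo 0 (1 - α)) (hlam : lam ∈ Set.Ioo (0 : ℝ) 1)
    (hsample :
      (n : ℝ) ≥ max ((1 - α) / lam ^ 2) ((α + ε) / (1 - lam) ^ 2) * (2 / ε ^ 2) *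
        Real.log (2 / δ)) :
    (P {ω | α ≤ F (empQuantile n (fun i => ζ i ω) (α + lam * ε)) ∧
        F (empQuantile n (fun i => ζ i ω) (α + lam * ε)) ≤ α + ε}).toReal ≥ 1 - δ := by
  classical
  obtain ⟨hδ0, hδ1⟩ := hδ
  obtain ⟨hα0, hα1⟩ := hα
  obtain ⟨hε0, hε1⟩ := hε
  obtain ⟨hl0, hl1⟩ := hlam
  have h1α : (0:ℝ) < 1 - α := by linarith
  have h1l : (0:ℝ) < 1 - lam := by linarith
  have hnR : (0:ℝ) < (n:ℝ) := Nat.cast_pos.2 hn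
  have i0 : Fin n := ⟨0, hn⟩
  haveI hμprob : IsProbabilityMeasure μ := by
    rw [← hident i0]; exact Measure.isProbabilityMeasure_map (hmeas i0).aemeasurable
  have hFmono : Monotone F := by
    intro x y hxy
    rw [hF x, hF y]
    exact ENNReal.toReal_mono (measure_ne_top μ _) (measure_mono (Set.Iic_subset_Iic.2 hxy))
  set αn := α + lam * ε with hαndef
  have hαn1 : αn < α + ε := by rw [hαndef]; nlinarith
  have hαε1 : α + ε < 1 := by linarith
  have hαn0 : 0 < αn := by rw [hαndef]; positivity
  -- limits of F
  have htop : Filter.Tendsto F Filter.atTop (nhds 1) := by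
    have h1 := MeasureTheory.tendsto_measure_Iic_atTop μ
    have h2 : Filter.Tendsto (fun z : ℝ => (μ (Set.Iic z)).toReal) Filter.atTop
        (nhds (μ Set.univ).toReal) :=
      (ENNReal.tendsto_toReal (measure_ne_top μ _)).comp h1
    simp only [measure_univ, ENNReal.toReal_one] at h2
    have : F = fun z : ℝ => (μ (Set.Iic z)).toReal := funext hF
    rw [this]
    exact h2
  have hex_lt : ∀ c : ℝ, 0 < c → ∃ M : ℝ, ∀ x ≤ M, F x < c := by
    intro c hc
    have h1 := MeasureTheory.tendsto_measure_Ici_atBot μ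
    have h2 : Filter.Tendsto (fun z : ℝ => (μ (Set.Ici z)).toReal) Filter.atBot
        (nhds (μ Set.univ).toReal) :=
      (ENNReal.tendsto_toReal (measure_ne_top μ _)).comp h1
    simp only [measure_univ, ENNReal.toReal_one] at h2
    have h3 : ∀ᶠ y in Filter.atBot, 1 - c < (μ (Set.Ici y)).toReal :=
      h2.eventually_const_lt (by linarith)
    obtain ⟨M, hM⟩ := Filter.eventually_atBot.1 h3
    refine ⟨M - 1, fun x hx => ?_⟩
    have hdisj : Disjoint (Set.Iic x) (Set.Ici (x + 1)) :=
      Set.Iic_disjoint_Ici.2 (by linarith)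
    have hun : μ (Set.Iic x) + μ (Set.Ici (x + 1)) ≤ 1 := by
      rw [← measure_union hdisj measurableSet_Ici]
      exact prob_le_one
    have hsum : (μ (Set.Iic x)).toReal + (μ (Set.Ici (x + 1))).toReal ≤ 1 := by
      have := ENNReal.toReal_mono ENNReal.one_ne_top hun
      rwa [ENNReal.toReal_add (measure_ne_top _ _) (measure_ne_top _ _),
        ENNReal.toReal_one] at this
    have hM' := hM (x + 1) (by linarith)
    rw [hF]
    linarith
  have hIVT : ∀ c : ℝ, 0 < c → c < 1 → ∃ a : ℝ, F a = c := by
    intro c hc0 hc1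
    obtain ⟨M, hM⟩ := hex_lt c hc0
    obtain ⟨x₁, hx₁⟩ := (htop.eventually_const_lt hc1).exists
    have hmem : c ∈ Set.uIcc (F M) (F x₁) := Set.mem_uIcc.2 (Or.inl ⟨(hM M le_rfl).le, hx₁.le⟩)
    obtain ⟨a, _, ha⟩ := intermediate_value_uIcc hFcont.continuousOn hmem
    exact ⟨a, ha⟩
  obtain ⟨a, ha⟩ := hIVT α hα0 hα1
  -- construction of b
  have hSbne : {x : ℝ | F x = α + ε}.Nonempty := hIVT (α + ε) (by linarith) hαε1
  have hSbclosed : IsClosed {x : ℝ | F x = α + ε} := isClosed_eq hFcont continuous_const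
  obtain ⟨M, hM⟩ := hex_lt (α + ε) (by linarith)
  have hSbbdd : BddBelow {x : ℝ | F x = α + ε} := by
    refine ⟨M, fun x hx => ?_⟩
    by_contra hc
    push_neg at hc
    exact (hM x hc.le).ne hx
  set b := sInf {x : ℝ | F x = α + ε} with hbdef
  have hbmem : F b = α + ε := hSbclosed.csInf_mem hSbne hSbbdd
  have hblt : ∀ x, x < b → F x < α + ε := by
    intro x hx
    rcases lt_or_eq_of_le (hFmono hx.le : F x ≤ F b) with hlt | heq
    · rwa [hbmem] at hlt
    · exfalso
      have hmem : x ∈ {x : ℝ | F x = α + ε} := by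
        rw [Set.mem_setOf_eq, heq, hbmem]
      exact absurd (csInf_le hSbbdd hmem) (not_le.2 hx)
  -- measurability of level sets
  have hFmeas : Measurable F := hFcont.measurable
  have hGA : MeasurableSet {x : ℝ | α ≤ F x} := measurableSet_Ici.preimage hFmeas
  have hGA' : MeasurableSet {x : ℝ | F x < α} := measurableSet_Iio.preimage hFmeas
  have hGB : MeasurableSet {x : ℝ | F x < α + ε} := measurableSet_Iio.preimage hFmeas
  -- probability of the level sets
  have hpA : 1 - α ≤ (μ {x : ℝ | α ≤ F x}).toReal := by
    have hsub : {x : ℝ | F x < α} ⊆ Set.Iic a := by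
      intro x hx
      by_contra hc
      rw [Set.mem_Iic, not_le] at hc
      have := hFmono hc.le
      rw [ha] at this
      exact absurd hx (not_lt.2 this)
    have h1 : (μ {x : ℝ | F x < α}).toReal ≤ α := by
      have := ENNReal.toReal_mono (measure_ne_top μ _) (measure_mono hsub)
      rwa [← hF a, ha] at this
    have hcompl : {x : ℝ | α ≤ F x} = {x : ℝ | F x < α}ᶜ := by
      ext x; simp [not_lt]
    rw [hcompl, prob_compl_eq_one_sub hGA',
      ENNReal.toReal_sub_of_le prob_le_one ENNReal.one_ne_top, ENNReal.toReal_one]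
    linarith
  have hpB : α + ε ≤ (μ {x : ℝ | F x < α + ε}).toReal := by
    have hIio : α + ε ≤ (μ (Set.Iio b)).toReal := by
      by_contra hc
      push_neg at hc
      obtain ⟨d, hd0, hd⟩ := Metric.continuousAt_iff.1 hFcont.continuousAt
        (α + ε - (μ (Set.Iio b)).toReal) (by linarith)
      have hcb : dist (b - d / 2) b < d := by
        rw [Real.dist_eq]
        rw [show b - d / 2 - b = -(d / 2) by ring, abs_neg, abs_of_pos (by linarith)]
        linarith
      have hdd := hd hcb
      rw [Real.dist_eq, hbmem] at hdd
      have hFc : (μ (Set.Iio b)).toReal < F (b - d / 2) := by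
        have := (abs_lt.1 hdd).2
        linarith [(abs_lt.1 hdd).1]
      have hle : F (b - d / 2) ≤ (μ (Set.Iio b)).toReal := by
        rw [hF]
        exact ENNReal.toReal_mono (measure_ne_top μ _)
          (measure_mono (Set.Iic_subset_Iio.2 (by linarith)))
      linarith
    have hsub : Set.Iio b ⊆ {x : ℝ | F x < α + ε} := fun x hx => hblt x hx
    exact hIio.trans (ENNReal.toReal_mono (measure_ne_top μ _) (measure_mono hsub))
  -- the indicator events
  set SA : Fin n → Set Ω := fun i => ζ i ⁻¹' {x : ℝ | α ≤ F x} with hSAdef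
  set SB : Fin n → Set Ω := fun i => ζ i ⁻¹' {x : ℝ | F x < α + ε} with hSBdef
  have hSAm : ∀ i, MeasurableSet (SA i) := fun i => hGA.preimage (hmeas i)
  have hSBm : ∀ i, MeasurableSet (SB i) := fun i => hGB.preimage (hmeas i)
  have hPA : ∀ i, 1 - α ≤ (P (SA i)).toReal := by
    intro i
    have : P (SA i) = μ {x : ℝ | α ≤ F x} := by
      rw [hSAdef, ← Measure.map_apply (hmeas i) hGA, hident i]
    rw [this]
    exact hpA
  have hPB : ∀ i, α + ε ≤ (P (SB i)).toReal := by
    intro i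
    have : P (SB i) = μ {x : ℝ | F x < α + ε} := by
      rw [hSBdef, ← Measure.map_apply (hmeas i) hGB, hident i]
    rw [this]
    exact hpB
  -- independence of the indicators
  have hindA : iIndepFun
      (fun i => (SA i).indicator (fun _ => (1:ℝ))) P := by
    have hcomp := hindep.comp
      (fun _ => Set.indicator {x : ℝ | α ≤ F x} (fun _ => (1:ℝ)))
      (fun _ => measurable_const.indicator hGA)
    have heq : (fun i => (SA i).indicator (fun _ => (1:ℝ)))
        = fun i => (Set.indicator {x : ℝ | α ≤ F x} (fun _ => (1:ℝ))) ∘ ζ i := by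
      funext i ω
      simp only [hSAdef, Function.comp_apply, Set.indicator_apply, Set.mem_preimage]
    rw [heq]
    exact hcomp
  have hindB : iIndepFun
      (fun i => (SB i).indicator (fun _ => (1:ℝ))) P := by
    have hcomp := hindep.comp
      (fun _ => Set.indicator {x : ℝ | F x < α + ε} (fun _ => (1:ℝ)))
      (fun _ => measurable_const.indicator hGB)
    have heq : (fun i => (SB i).indicator (fun _ => (1:ℝ)))
        = fun i => (Set.indicator {x : ℝ | F x < α + ε} (fun _ => (1:ℝ))) ∘ ζ i := by
      funext i ω
      simp only [hSBdef, Function.comp_apply, Set.indicator_apply, Set.mem_preimage]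
    rw [heq]
    exact hcomp
  -- Chernoff bounds
  have hchA := chernoff_lower P n SA hSAm hindA (ρ := 1 - α) (h := lam * ε) hPA
    (by positivity) (by nlinarith)
  have hchB := chernoff_lower P n SB hSBm hindB (ρ := α + ε) (h := (1 - lam) * ε) hPB
    (by positivity) (by nlinarith)
  -- sums of indicators are cardinalities
  have hsumA : ∀ ω, ∑ i, (SA i).indicator (fun _ => (1:ℝ)) ω
      = ((Finset.univ.filter (fun i => α ≤ F (ζ i ω))).card : ℝ) := by
    intro ω
    rw [← Finset.sum_boole]
    apply Finset.sum_congr rfl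
    intro i _
    by_cases hc : α ≤ F (ζ i ω)
    · simp [hSAdef, Set.indicator_apply, Set.mem_preimage, hc]
    · simp [hSAdef, Set.indicator_apply, Set.mem_preimage, hc]
  have hsumB : ∀ ω, ∑ i, (SB i).indicator (fun _ => (1:ℝ)) ω
      = ((Finset.univ.filter (fun i => F (ζ i ω) < α + ε)).card : ℝ) := by
    intro ω
    rw [← Finset.sum_boole]
    apply Finset.sum_congr rfl
    intro i _
    by_cases hc : F (ζ i ω) < α + ε
    · simp [hSBdef, Set.indicator_apply, Set.mem_preimage, hc]
    · simp [hSBdef, Set.indicator_apply, Set.mem_preimage, hc]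
  -- event inclusions
  have hincA : {ω | F (empQuantile n (fun i => ζ i ω) αn) < α}
      ⊆ {ω | ∑ i, (SA i).indicator (fun _ => (1:ℝ)) ω ≤ (n:ℝ) * (1 - α - lam * ε)} := by
    intro ω hω
    simp only [Set.mem_setOf_eq] at hω ⊢
    obtain ⟨hQ1, hQ2⟩ := empQuantile_spec hn (fun i => ζ i ω) (γ := αn) hαn0
      (le_of_lt (hαn1.trans hαε1))
    rw [empCDF] at hQ1
    have hcard1 : (n:ℝ) * αn ≤
        ((Finset.univ.filter (fun i => ζ i ω ≤ empQuantile n (fun i => ζ i ω) αn)).card : ℝ) := by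
      have := (le_div_iff₀ hnR).1 hQ1
      linarith
    have hdisj : Disjoint (Finset.univ.filter (fun i => α ≤ F (ζ i ω)))
        (Finset.univ.filter (fun i => ζ i ω ≤ empQuantile n (fun i => ζ i ω) αn)) := by
      rw [Finset.disjoint_left]
      intro i hi1 hi2
      have h1 := (Finset.mem_filter.1 hi1).2
      have h2 := (Finset.mem_filter.1 hi2).2
      have h3 : F (ζ i ω) < α := (hFmono h2).trans_lt hω
      exact absurd h1 (not_le.2 h3)
    have hcards : (Finset.univ.filter (fun i => α ≤ F (ζ i ω))).card
        + (Finset.univ.filter (fun i => ζ i ω ≤ empQuantile n (fun i => ζ i ω) αn)).card ≤ n := by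
      have h1 := Finset.card_le_univ
        ((Finset.univ.filter (fun i => α ≤ F (ζ i ω)))
          ∪ (Finset.univ.filter (fun i => ζ i ω ≤ empQuantile n (fun i => ζ i ω) αn)))
      rw [Finset.card_union_of_disjoint hdisj] at h1
      simpa using h1
    rw [hsumA ω]
    have hcast : ((Finset.univ.filter (fun i => α ≤ F (ζ i ω))).card : ℝ)
        + ((Finset.univ.filter (fun i => ζ i ω ≤ empQuantile n (fun i => ζ i ω) αn)).card : ℝ)
        ≤ (n:ℝ) := by exact_mod_cast hcards
    rw [hαndef] at hcard1
    linarith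
  have hincB : {ω | α + ε < F (empQuantile n (fun i => ζ i ω) αn)}
      ⊆ {ω | ∑ i, (SB i).indicator (fun _ => (1:ℝ)) ω ≤ (n:ℝ) * (α + ε - (1 - lam) * ε)} := by
    intro ω hω
    simp only [Set.mem_setOf_eq] at hω ⊢
    obtain ⟨hQ1, hQ2⟩ := empQuantile_spec hn (fun i => ζ i ω) (γ := αn) hαn0
      (le_of_lt (hαn1.trans hαε1))
    have hbQ : b < empQuantile n (fun i => ζ i ω) αn := by
      by_contra hc
      push_neg at hc
      have := hFmono hc
      rw [hbmem] at this
      linarith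
    have hcb := hQ2 b hbQ
    rw [empCDF] at hcb
    have hcard : ((Finset.univ.filter (fun i => ζ i ω ≤ b)).card : ℝ) < (n:ℝ) * αn := by
      have := (div_lt_iff₀ hnR).1 hcb
      linarith
    have hsub : (Finset.univ.filter (fun i => F (ζ i ω) < α + ε))
        ⊆ (Finset.univ.filter (fun i => ζ i ω ≤ b)) := by
      intro i hi
      have h1 := (Finset.mem_filter.1 hi).2
      refine Finset.mem_filter.2 ⟨Finset.mem_univ _, ?_⟩
      by_contra hc
      push_neg at hc
      have := hFmono hc.le
      rw [hbmem] at this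
      linarith
    have hle : ((Finset.univ.filter (fun i => F (ζ i ω) < α + ε)).card : ℝ)
        ≤ ((Finset.univ.filter (fun i => ζ i ω ≤ b)).card : ℝ) :=
      Nat.cast_le.2 (Finset.card_le_card hsub)
    rw [hsumB ω]
    have heq2 : (n:ℝ) * (α + ε - (1 - lam) * ε) = (n:ℝ) * αn := by
      rw [hαndef]; ring
    rw [heq2]
    linarith
  -- numeric bounds on the exponentials
  have hL : 0 < Real.log (2 / δ) := Real.log_pos (by rw [lt_div_iff₀ hδ0]; linarith)
  have hboundA : Real.exp (-((n:ℝ) * (lam * ε) ^ 2 / (2 * (1 - α)))) ≤ δ / 2 := by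
    have hc1 : ((1 - α) / lam ^ 2) * (2 / ε ^ 2) * Real.log (2 / δ) ≤ (n:ℝ) := by
      refine le_trans ?_ hsample
      exact mul_le_mul_of_nonneg_right
        (mul_le_mul_of_nonneg_right (le_max_left _ _) (by positivity)) hL.le
    have hk : (0:ℝ) < (lam * ε) ^ 2 / (2 * (1 - α)) :=
      div_pos (pow_pos (mul_pos hl0 hε0) 2) (by linarith)
    have heq : ((1 - α) / lam ^ 2) * (2 / ε ^ 2) * Real.log (2 / δ)
        * ((lam * ε) ^ 2 / (2 * (1 - α))) = Real.log (2 / δ) := by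
      field_simp [hl0.ne', hε0.ne', h1α.ne']
    have h2 : Real.log (2 / δ) ≤ (n:ℝ) * ((lam * ε) ^ 2 / (2 * (1 - α))) := by
      rw [← heq]
      exact mul_le_mul_of_nonneg_right hc1 hk.le
    have h3 : (n:ℝ) * (lam * ε) ^ 2 / (2 * (1 - α))
        = (n:ℝ) * ((lam * ε) ^ 2 / (2 * (1 - α))) := by ring
    rw [h3]
    calc Real.exp (-((n:ℝ) * ((lam * ε) ^ 2 / (2 * (1 - α)))))
        ≤ Real.exp (-(Real.log (2 / δ))) := Real.exp_le_exp.2 (by linarith)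
      _ = δ / 2 := by rw [Real.exp_neg, Real.exp_log (by positivity), inv_div]
  have hboundB : Real.exp (-((n:ℝ) * ((1 - lam) * ε) ^ 2 / (2 * (α + ε)))) ≤ δ / 2 := by
    have hc1 : ((α + ε) / (1 - lam) ^ 2) * (2 / ε ^ 2) * Real.log (2 / δ) ≤ (n:ℝ) := by
      refine le_trans ?_ hsample
      exact mul_le_mul_of_nonneg_right
        (mul_le_mul_of_nonneg_right (le_max_right _ _) (by positivity)) hL.le
    have hk : (0:ℝ) < ((1 - lam) * ε) ^ 2 / (2 * (α + ε)) :=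
      div_pos (pow_pos (mul_pos h1l hε0) 2) (by linarith)
    have heq : ((α + ε) / (1 - lam) ^ 2) * (2 / ε ^ 2) * Real.log (2 / δ)
        * (((1 - lam) * ε) ^ 2 / (2 * (α + ε))) = Real.log (2 / δ) := by
      have hαεne : (α + ε) ≠ 0 := by positivity
      field_simp [h1l.ne', hε0.ne', hαεne]
    have h2 : Real.log (2 / δ) ≤ (n:ℝ) * (((1 - lam) * ε) ^ 2 / (2 * (α + ε))) := by
      rw [← heq]
      exact mul_le_mul_of_nonneg_right hc1 hk.le
    have h3 : (n:ℝ) * ((1 - lam) * ε) ^ 2 / (2 * (α + ε))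
        = (n:ℝ) * (((1 - lam) * ε) ^ 2 / (2 * (α + ε))) := by ring
    rw [h3]
    calc Real.exp (-((n:ℝ) * (((1 - lam) * ε) ^ 2 / (2 * (α + ε)))))
        ≤ Real.exp (-(Real.log (2 / δ))) := Real.exp_le_exp.2 (by linarith)
      _ = δ / 2 := by rw [Real.exp_neg, Real.exp_log (by positivity), inv_div]
  -- final assembly
  have hAfinal : (P {ω | F (empQuantile n (fun i => ζ i ω) αn) < α}).toReal ≤ δ / 2 := by
    refine le_trans ?_ (hchA.trans hboundA)
    exact ENNReal.toReal_mono (measure_ne_top _ _) (measure_mono hincA)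
  have hBfinal : (P {ω | α + ε < F (empQuantile n (fun i => ζ i ω) αn)}).toReal ≤ δ / 2 := by
    refine le_trans ?_ (hchB.trans hboundB)
    exact ENNReal.toReal_mono (measure_ne_top _ _) (measure_mono hincB)
  set E := {ω | α ≤ F (empQuantile n (fun i => ζ i ω) αn) ∧
      F (empQuantile n (fun i => ζ i ω) αn) ≤ α + ε} with hEdef
  set A' := {ω | F (empQuantile n (fun i => ζ i ω) αn) < α} with hA'def
  set B' := {ω | α + ε < F (empQuantile n (fun i => ζ i ω) αn)} with hB'def
  have hcover : Set.univ ⊆ E ∪ (A' ∪ B') := by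
    intro ω _
    by_cases h1 : α ≤ F (empQuantile n (fun i => ζ i ω) αn)
    · by_cases h2 : F (empQuantile n (fun i => ζ i ω) αn) ≤ α + ε
      · exact Or.inl ⟨h1, h2⟩
      · exact Or.inr (Or.inr (not_le.1 h2))
    · exact Or.inr (Or.inl (not_le.1 h1))
  have hone : (1 : ENNReal) ≤ P E + (P A' + P B') := by
    calc (1 : ENNReal) = P Set.univ := measure_univ.symm
      _ ≤ P (E ∪ (A' ∪ B')) := measure_mono hcover
      _ ≤ P E + P (A' ∪ B') := measure_union_le _ _
      _ ≤ P E + (P A' + P B') := add_le_add le_rfl (measure_union_le _ _)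
  have hfin : P E + (P A' + P B') ≠ ⊤ :=
    ENNReal.add_ne_top.2 ⟨measure_ne_top _ _,
      ENNReal.add_ne_top.2 ⟨measure_ne_top _ _, measure_ne_top _ _⟩⟩
  have h2 := ENNReal.toReal_mono hfin hone
  rw [ENNReal.toReal_one,
    ENNReal.toReal_add (measure_ne_top _ _)
      (ENNReal.add_ne_top.2 ⟨measure_ne_top _ _, measure_ne_top _ _⟩),
    ENNReal.toReal_add (measure_ne_top _ _) (measure_ne_top _ _)] at h2
  rw [ge_iff_le]
  linarith
end
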